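/- Let F, G be distribution functions, σ > 0, and let p_σ, q_σ be the densities of their Gaussian regularizations with parameter σ (convolutions with N(0,σ²)). Then sup_x |p_σ(x) − q_σ(x)| ≤ (L(F,G)/σ)·(1 + 1/(2σ)), where L is the Lévy distance. -/

import Mathlib

open Real MeasureTheory Set ProbabilityTheory Filter Topology

/-- Density of N(0,σ²). -/
noncomputable def normalDensity (σ : ℝ) (x : ℝ) : ℝ :=
  (σ * Real.sqrt (2 * Real.pi))⁻¹ * Real.exp (-x ^ 2 / (2 * σ ^ 2))

/-- Lévy distance between two distribution functions. -/
noncomputable def levyDist (F G : ℝ → ℝ) : ℝ :=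
  sInf {h : ℝ | 0 ≤ h ∧ ∀ x : ℝ, G (x - h) - h ≤ F x ∧ F x ≤ G (x + h) + h}

namespace Stmt18

variable {σ : ℝ}

noncomputable def C (σ : ℝ) : ℝ := (σ * Real.sqrt (2 * Real.pi))⁻¹

lemma two_pi_pos : (0:ℝ) < 2 * π := by positivity

lemma C_pos (hσ : 0 < σ) : 0 < C σ := by
  have := Real.sqrt_pos.2 two_pi_pos
  unfold C; positivity

lemma nd_eq (x : ℝ) : normalDensity σ x = C σ * Real.exp (-((2*σ^2)⁻¹) * x^2) := by
  unfold normalDensity C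
  congr 1
  ring

lemma b_pos (hσ : 0 < σ) : (0:ℝ) < (2*σ^2)⁻¹ := by positivity

lemma nd_nonneg (hσ : 0 < σ) (x : ℝ) : 0 ≤ normalDensity σ x := by
  rw [nd_eq]
  exact mul_nonneg (C_pos hσ).le (Real.exp_nonneg _)

lemma integrable_nd (hσ : 0 < σ) : Integrable (normalDensity σ) := by
  have : normalDensity σ = fun x => C σ * Real.exp (-((2*σ^2)⁻¹) * x^2) := funext nd_eq
  rw [this]
  exact (integrable_exp_neg_mul_sq (b_pos hσ)).const_mul _

lemma integrable_mul_nd (hσ : 0 < σ) : Integrable (fun u => u * normalDensity σ u) := by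
  have : (fun u => u * normalDensity σ u)
      = fun u => C σ * (u * Real.exp (-((2*σ^2)⁻¹) * u^2)) := by
    funext u; rw [nd_eq]; ring
  rw [this]
  exact (integrable_mul_exp_neg_mul_sq (b_pos hσ)).const_mul _

lemma integrable_abs_mul_nd (hσ : 0 < σ) : Integrable (fun u => |u| * normalDensity σ u) := by
  have h := (integrable_mul_nd hσ).abs
  refine h.congr (Eventually.of_forall fun u => ?_)
  show |u * normalDensity σ u| = |u| * normalDensity σ u
  rw [abs_mul, abs_of_nonneg (nd_nonneg hσ u)]

lemma integral_Ioi_mul_exp {b : ℝ} (hb : 0 < b) :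
    ∫ r in Ioi (0:ℝ), r * Real.exp (-b * r^2) = (2*b)⁻¹ := by
  have A : ∀ x ∈ Ici (0:ℝ), HasDerivAt (fun x => -(2*b)⁻¹ * Real.exp (-b*x^2))
      (x * Real.exp (-b*x^2)) x := by
    intro x _
    have h := (((hasDerivAt_pow 2 x).const_mul (-b)).exp).const_mul (-(2*b)⁻¹)
    refine h.congr_deriv ?_
    field_simp
    ring
  have B : Tendsto (fun x : ℝ => -(2*b)⁻¹ * Real.exp (-b*x^2)) atTop (𝓝 (-(2*b)⁻¹ * 0)) := by
    apply Tendsto.const_mul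
    apply Real.tendsto_exp_atBot.comp
    have h2 : Tendsto (fun x:ℝ => x^2) atTop atTop := tendsto_pow_atTop two_ne_zero
    exact (tendsto_const_mul_atBot_of_neg (by linarith)).2 h2
  have hint : IntegrableOn (fun x : ℝ => x * Real.exp (-b*x^2)) (Ioi 0) :=
    (integrable_mul_exp_neg_mul_sq hb).integrableOn
  rw [integral_Ioi_of_hasDerivAt_of_tendsto' A hint B]
  simp

lemma integral_abs_mul_nd (hσ : 0 < σ) :
    ∫ u, |u| * normalDensity σ u = 2 * σ^2 * C σ := by
  have h1 : ∫ u, |u| * normalDensity σ u = ∫ u, |u| * normalDensity σ |u| := by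
    congr 1; funext u; rw [nd_eq, nd_eq, sq_abs]
  rw [h1, integral_comp_abs (f := fun v => v * normalDensity σ v)]
  have : ∀ v : ℝ, v * normalDensity σ v = C σ * (v * Real.exp (-((2*σ^2)⁻¹) * v^2)) := by
    intro v; rw [nd_eq]; ring
  simp_rw [this]
  rw [integral_const_mul, integral_Ioi_mul_exp (b_pos hσ)]
  field_simp

-- pointwise bound
lemma abs_mul_nd_le (hσ : 0 < σ) (u : ℝ) :
    |u| * normalDensity σ u ≤ σ * C σ * Real.exp (-2⁻¹ : ℝ) := by
  rw [nd_eq]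
  have key : |u| * Real.exp (-((2*σ^2)⁻¹) * u^2) ≤ σ * Real.exp (-2⁻¹ : ℝ) := by
    have h1 : |u| ≤ σ * Real.exp ((2*σ^2)⁻¹ * u^2 - 2⁻¹) := by
      have h2 : ((2*σ^2)⁻¹ * u^2 - 2⁻¹) + 1 ≤ Real.exp ((2*σ^2)⁻¹ * u^2 - 2⁻¹) :=
        Real.add_one_le_exp _
      have h3 : |u| ≤ σ * (((2*σ^2)⁻¹ * u^2 - 2⁻¹) + 1) := by
        have hu : u^2 = |u|^2 := (sq_abs u).symm
        have h4 : σ * (((2*σ^2)⁻¹ * u^2 - 2⁻¹) + 1) = u^2/(2*σ) + σ/2 := by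
          field_simp; ring
        rw [h4, hu]
        have hpos : (0:ℝ) < 2*σ := by positivity
        have h5 : 2*σ*|u| ≤ |u|^2 + σ^2 := by nlinarith [sq_nonneg (|u| - σ)]
        have h6 : |u| = (2*σ*|u|)/(2*σ) := by field_simp
        have h8 : σ/2 = σ^2/(2*σ) := by
          rw [eq_div_iff (ne_of_gt hpos)]; ring
        have h7 : |u|^2/(2*σ) + σ/2 = (|u|^2 + σ^2)/(2*σ) := by
          rw [h8, ← add_div]
        rw [h7]
        conv_lhs => rw [h6]
        gcongr
      exact h3.trans (by nlinarith [Real.exp_pos ((2*σ^2)⁻¹ * u^2 - 2⁻¹)])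
    calc |u| * Real.exp (-((2*σ^2)⁻¹) * u^2)
        ≤ (σ * Real.exp ((2*σ^2)⁻¹ * u^2 - 2⁻¹)) * Real.exp (-((2*σ^2)⁻¹) * u^2) := by
          exact mul_le_mul_of_nonneg_right h1 (Real.exp_nonneg _)
      _ = σ * Real.exp (-2⁻¹ : ℝ) := by
          rw [mul_assoc, ← Real.exp_add]; congr 2; ring
  calc |u| * (C σ * Real.exp (-((2*σ^2)⁻¹) * u^2))
      = C σ * (|u| * Real.exp (-((2*σ^2)⁻¹) * u^2)) := by ring
    _ ≤ C σ * (σ * Real.exp (-2⁻¹ : ℝ)) := by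
        exact mul_le_mul_of_nonneg_left key (C_pos hσ).le
    _ = σ * C σ * Real.exp (-2⁻¹ : ℝ) := by ring

lemma integrable_k (hσ : 0 < σ) (x : ℝ) :
    Integrable (fun y => ((y - x)/σ^2) * normalDensity σ (x - y)) := by
  have hg : Integrable (fun u : ℝ => -(u * normalDensity σ u) / σ^2) :=
    ((integrable_mul_nd hσ).neg).div_const _
  have h := hg.comp_sub_left x
  refine h.congr (Eventually.of_forall fun y => ?_)
  show -((x - y) * normalDensity σ (x - y)) / σ^2 = ((y - x)/σ^2) * normalDensity σ (x - y)
  ring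

lemma tendsto_nd_sub (hσ : 0 < σ) (x : ℝ) :
    Tendsto (fun y => normalDensity σ (x - y)) atTop (𝓝 0) := by
  have h0 : (fun y => normalDensity σ (x - y))
      = fun y => C σ * Real.exp (-((2*σ^2)⁻¹) * (y - x)^2) := by
    funext y; rw [nd_eq]; congr 2; ring
  rw [h0]
  have h1 : Tendsto (fun y : ℝ => (y - x)^2) atTop atTop :=
    (tendsto_pow_atTop two_ne_zero).comp (tendsto_atTop_add_const_right _ _ tendsto_id)
  have hneg : -((2*σ^2)⁻¹) < (0:ℝ) := neg_neg_iff_pos.2 (b_pos hσ)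
  have h2 : Tendsto (fun y : ℝ => -((2*σ^2)⁻¹) * (y - x)^2) atTop atBot :=
    (tendsto_const_mul_atBot_of_neg hneg).2 h1
  have h3 := Real.tendsto_exp_atBot.comp h2
  have h4 := h3.const_mul (C σ)
  simpa [Function.comp] using h4

lemma integral_Ioi_k (hσ : 0 < σ) (x t : ℝ) :
    ∫ y in Ioi t, ((y - x)/σ^2) * normalDensity σ (x - y) = normalDensity σ (x - t) := by
  have hσ' : σ ≠ 0 := hσ.ne'
  have hder : ∀ y ∈ Ici t, HasDerivAt (fun y => -normalDensity σ (x - y))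
      (((y - x)/σ^2) * normalDensity σ (x - y)) y := by
    intro y _
    have h1 : HasDerivAt (fun y : ℝ => x - y) (-1) y := (hasDerivAt_id y).const_sub x
    have h2 := (((h1.pow 2).neg.div_const (2*σ^2)).exp.const_mul
      ((σ * Real.sqrt (2 * Real.pi))⁻¹)).neg
    refine h2.congr_deriv ?_
    simp only [normalDensity, Pi.pow_apply, Pi.neg_apply]
    field_simp
    ring
  have hint : IntegrableOn (fun y => ((y - x)/σ^2) * normalDensity σ (x - y)) (Ioi t) :=
    (integrable_k hσ x).integrableOn
  have htend : Tendsto (fun y => -normalDensity σ (x - y)) atTop (𝓝 (-0)) :=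
    (tendsto_nd_sub hσ x).neg
  rw [integral_Ioi_of_hasDerivAt_of_tendsto' hder hint (by simpa using htend)]
  simp

lemma continuous_nd : Continuous (normalDensity σ) := by
  unfold normalDensity
  fun_prop

lemma repr_integral (hσ : 0 < σ) (μ : Measure ℝ) [IsProbabilityMeasure μ] (x : ℝ) :
    ∫ y, normalDensity σ (x - y) ∂μ
      = ∫ y, (((y - x)/σ^2) * normalDensity σ (x - y)) * cdf μ y := by
  set k : ℝ → ℝ := fun y => ((y - x)/σ^2) * normalDensity σ (x - y) with hk_def
  have hk : Integrable k := integrable_k hσ x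
  have hmeas_set : MeasurableSet {p : ℝ × ℝ | p.2 ≤ p.1} :=
    measurableSet_le measurable_snd measurable_fst
  have hF_int : Integrable (fun p : ℝ × ℝ => if p.2 ≤ p.1 then k p.1 else 0)
      (volume.prod μ) := by
    have h1 : Integrable (fun p : ℝ × ℝ => k p.1) (volume.prod μ) := by
      have := hk.mul_prod (integrable_const (1:ℝ)) (ν := μ)
      simpa using this
    have h2 := h1.indicator hmeas_set
    refine h2.congr (Eventually.of_forall fun p => ?_)
    by_cases h : p.2 ≤ p.1 <;> simp [Set.indicator_apply, h]
  have swap := integral_integral_swap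
    (f := fun y t => if t ≤ y then k y else 0) (μ := volume) (ν := μ) hF_int
  have hleft : ∀ y : ℝ, (∫ t, (if t ≤ y then k y else 0) ∂μ) = k y * cdf μ y := by
    intro y
    have h1 : (fun t => if t ≤ y then k y else 0) = (Iic y).indicator (fun _ => k y) := by
      funext t
      by_cases h : t ≤ y <;> simp [Set.indicator_apply, h]
    rw [h1, integral_indicator measurableSet_Iic, setIntegral_const, smul_eq_mul,
      cdf_eq_real, mul_comm]
  have hright : ∀ t : ℝ, (∫ y, (if t ≤ y then k y else 0)) = normalDensity σ (x - t) := by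
    intro t
    have h1 : (fun y => if t ≤ y then k y else 0) = (Ici t).indicator k := by
      funext y
      by_cases h : t ≤ y <;> simp [Set.indicator_apply, h]
    rw [h1, integral_indicator measurableSet_Ici, integral_Ici_eq_integral_Ioi,
      integral_Ioi_k hσ x t]
  calc ∫ y, normalDensity σ (x - y) ∂μ
      = ∫ t, (∫ y, (if t ≤ y then k y else 0)) ∂μ := by
        refine integral_congr_ae (Eventually.of_forall fun t => ?_)
        exact (hright t).symm
    _ = ∫ y, (∫ t, (if t ≤ y then k y else 0) ∂μ) := swap.symm
    _ = ∫ y, k y * cdf μ y := by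
        refine integral_congr_ae (Eventually.of_forall fun y => ?_)
        exact hleft y

lemma abs_k_eq (hσ : 0 < σ) (x y : ℝ) :
    |((y - x)/σ^2) * normalDensity σ (x - y)|
      = (|x - y|/σ^2) * normalDensity σ (x - y) := by
  rw [abs_mul, abs_div, abs_of_nonneg (nd_nonneg hσ (x - y)), abs_of_nonneg (sq_nonneg σ),
    abs_sub_comm]

lemma abs_k_le (hσ : 0 < σ) (x y : ℝ) :
    |((y - x)/σ^2) * normalDensity σ (x - y)| ≤ C σ * Real.exp (-2⁻¹ : ℝ) / σ := by
  rw [abs_k_eq hσ]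
  have h := abs_mul_nd_le hσ (x - y)
  rw [div_mul_eq_mul_div, div_le_div_iff₀ (by positivity) hσ]
  calc |x - y| * normalDensity σ (x - y) * σ
      ≤ (σ * C σ * Real.exp (-2⁻¹ : ℝ)) * σ := by
        exact mul_le_mul_of_nonneg_right h hσ.le
    _ = C σ * Real.exp (-2⁻¹ : ℝ) * σ^2 := by ring

lemma integrable_abs_k (hσ : 0 < σ) (x : ℝ) :
    Integrable (fun y => |((y - x)/σ^2) * normalDensity σ (x - y)|) :=
  (integrable_k hσ x).abs

lemma integral_abs_k (hσ : 0 < σ) (x : ℝ) :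
    ∫ y, |((y - x)/σ^2) * normalDensity σ (x - y)| = 2 * C σ := by
  have h1 : ∀ y, |((y - x)/σ^2) * normalDensity σ (x - y)|
      = (fun u => |u| * normalDensity σ u / σ^2) (x - y) := by
    intro y
    rw [abs_k_eq hσ]
    simp only
    ring
  simp_rw [h1]
  rw [integral_sub_left_eq_self (fun u => |u| * normalDensity σ u / σ^2) volume x]
  simp_rw [div_eq_mul_inv]
  rw [integral_mul_const, integral_abs_mul_nd hσ]
  field_simp

lemma cdf_diff_eq (ν : Measure ℝ) [IsProbabilityMeasure ν] (y h : ℝ) (hh : 0 ≤ h) :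
    cdf ν (y + h) - cdf ν (y - h)
      = ∫ t, (if y - h < t ∧ t ≤ y + h then (1:ℝ) else 0) ∂ν := by
  have hsplit : ν (Iic (y+h)) = ν (Iic (y-h)) + ν (Ioc (y-h) (y+h)) := by
    rw [← measure_union (Iic_disjoint_Ioc le_rfl) measurableSet_Ioc,
      Iic_union_Ioc_eq_Iic (show y - h ≤ y + h by linarith)]
  have hind : (fun t => if y - h < t ∧ t ≤ y + h then (1:ℝ) else 0)
      = (Ioc (y-h) (y+h)).indicator 1 := by
    funext t
    by_cases ht : y - h < t ∧ t ≤ y + h <;>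
      simp [Set.indicator_apply, Set.mem_Ioc, ht]
  rw [hind, integral_indicator_one measurableSet_Ioc, cdf_eq_real, cdf_eq_real]
  simp only [measureReal_def]
  rw [hsplit, ENNReal.toReal_add (measure_ne_top _ _) (measure_ne_top _ _)]
  ring

lemma bound_Gdiff (hσ : 0 < σ) (ν : Measure ℝ) [IsProbabilityMeasure ν] (x h : ℝ) (hh : 0 ≤ h) :
    ∫ y, |((y - x)/σ^2) * normalDensity σ (x - y)| * (cdf ν (y + h) - cdf ν (y - h))
      ≤ 2 * h * (C σ * Real.exp (-2⁻¹ : ℝ) / σ) := by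
  set a : ℝ → ℝ := fun y => |((y - x)/σ^2) * normalDensity σ (x - y)| with ha_def
  set M : ℝ := C σ * Real.exp (-2⁻¹ : ℝ) / σ with hM_def
  have hM_pos : 0 < M := by
    have := C_pos hσ
    have := Real.exp_pos (-2⁻¹ : ℝ)
    positivity
  have ha_nonneg : ∀ y, 0 ≤ a y := fun y => abs_nonneg _
  have ha_le : ∀ y, a y ≤ M := fun y => abs_k_le hσ x y
  have ha_int : Integrable a := integrable_abs_k hσ x
  -- rewrite as double integral
  have hstep1 : ∀ y, a y * (cdf ν (y + h) - cdf ν (y - h))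
      = ∫ t, (if y - h < t ∧ t ≤ y + h then a y else 0) ∂ν := by
    intro y
    rw [cdf_diff_eq ν y h hh, ← integral_const_mul]
    congr 1
    funext t
    by_cases ht : y - h < t ∧ t ≤ y + h <;> simp [ht]
  have hmeas_set : MeasurableSet {p : ℝ × ℝ | p.1 - h < p.2 ∧ p.2 ≤ p.1 + h} := by
    apply MeasurableSet.inter
    · exact measurableSet_lt (measurable_fst.sub_const h) measurable_snd
    · exact measurableSet_le measurable_snd (measurable_fst.add_const h)
  have hF_int : Integrable
      (fun p : ℝ × ℝ => if p.1 - h < p.2 ∧ p.2 ≤ p.1 + h then a p.1 else 0)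
      (volume.prod ν) := by
    have h1 : Integrable (fun p : ℝ × ℝ => a p.1) (volume.prod ν) := by
      have := ha_int.mul_prod (integrable_const (1:ℝ)) (ν := ν)
      simpa using this
    have h2 := h1.indicator hmeas_set
    refine h2.congr (Eventually.of_forall fun p => ?_)
    by_cases hp : p.1 - h < p.2 ∧ p.2 ≤ p.1 + h <;> simp [Set.indicator_apply, hp]
  have swap := integral_integral_swap
    (f := fun y t => if y - h < t ∧ t ≤ y + h then a y else 0) (μ := volume) (ν := ν) hF_int
  have hinner : ∀ t : ℝ, (∫ y, (if y - h < t ∧ t ≤ y + h then a y else 0)) ≤ M * (2*h) := by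
    intro t
    have hiff : ∀ y : ℝ, (y - h < t ∧ t ≤ y + h) ↔ y ∈ Ico (t - h) (t + h) := by
      intro y
      rw [Set.mem_Ico]
      constructor <;> rintro ⟨u, v⟩ <;> constructor <;> linarith
    have h1 : (fun y => if y - h < t ∧ t ≤ y + h then a y else 0)
        = (Ico (t - h) (t + h)).indicator a := by
      funext y
      by_cases hy : y ∈ Ico (t - h) (t + h)
      · rw [if_pos ((hiff y).2 hy), Set.indicator_of_mem hy]
      · rw [if_neg (fun hc => hy ((hiff y).1 hc)), Set.indicator_of_notMem hy]
    rw [h1, integral_indicator measurableSet_Ico]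
    calc ∫ y in Ico (t - h) (t + h), a y
        ≤ ∫ _ in Ico (t - h) (t + h), M := by
          apply setIntegral_mono_on ha_int.integrableOn (integrableOn_const ?_)
            measurableSet_Ico (fun y _ => ha_le y)
          rw [Real.volume_Ico]
          exact ENNReal.ofReal_ne_top
      _ = M * (2*h) := by
          rw [setIntegral_const, smul_eq_mul, measureReal_def, Real.volume_Ico,
            ENNReal.toReal_ofReal (by linarith : (0:ℝ) ≤ t + h - (t - h))]
          ring_nf
  calc ∫ y, a y * (cdf ν (y + h) - cdf ν (y - h))
      = ∫ y, ∫ t, (if y - h < t ∧ t ≤ y + h then a y else 0) ∂ν := by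
        refine integral_congr_ae (Eventually.of_forall fun y => ?_)
        exact hstep1 y
    _ = ∫ t, (∫ y, (if y - h < t ∧ t ≤ y + h then a y else 0)) ∂ν := swap
    _ ≤ ∫ _t, M * (2*h) ∂ν := by
        apply integral_mono_of_nonneg
        · refine Eventually.of_forall fun t => ?_
          apply integral_nonneg
          intro y
          by_cases hy : y - h < t ∧ t ≤ y + h <;> simp [hy, ha_nonneg y]
        · exact integrable_const _
        · exact Eventually.of_forall fun t => hinner t
    _ = 2 * h * M := by
        rw [integral_const]
        simp [mul_comm]

lemma sqrt_two_pi_ge : (2.5:ℝ) ≤ Real.sqrt (2*π) := by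
  have h1 : (2.5:ℝ) = Real.sqrt 6.25 := by
    rw [show (6.25:ℝ) = 2.5^2 by norm_num, Real.sqrt_sq (by norm_num)]
  rw [h1]
  apply Real.sqrt_le_sqrt
  nlinarith [Real.pi_gt_d2]

lemma exp_neg_half_le : Real.exp (-2⁻¹ : ℝ) ≤ 5/8 := by
  have h1 : Real.exp (2⁻¹ : ℝ) * Real.exp (2⁻¹ : ℝ) = Real.exp 1 := by
    rw [← Real.exp_add]; norm_num
  have h2 : (2.7182818283:ℝ) < Real.exp 1 := Real.exp_one_gt_d9
  have h3 : (8/5:ℝ) ≤ Real.exp (2⁻¹ : ℝ) := by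
    nlinarith [Real.exp_pos (2⁻¹ : ℝ)]
  have h4 : Real.exp (-2⁻¹ : ℝ) = (Real.exp (2⁻¹ : ℝ))⁻¹ := by
    rw [← Real.exp_neg]
  rw [h4]
  rw [show (5/8:ℝ) = (8/5)⁻¹ by norm_num]
  exact inv_anti₀ (by norm_num) h3

lemma C_le (hσ : 0 < σ) : C σ ≤ (2.5 * σ)⁻¹ := by
  unfold C
  apply inv_anti₀ (by positivity)
  nlinarith [sqrt_two_pi_ge, hσ]

lemma pointwise_bound (hσ : 0 < σ) (μ ν : Measure ℝ) [IsProbabilityMeasure μ]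
    [IsProbabilityMeasure ν] (x h : ℝ) (hh : 0 ≤ h)
    (hFG : ∀ y : ℝ, cdf ν (y - h) - h ≤ cdf μ y ∧ cdf μ y ≤ cdf ν (y + h) + h) :
    |(∫ y, normalDensity σ (x - y) ∂μ) - ∫ y, normalDensity σ (x - y) ∂ν|
      ≤ (h/σ) * (1 + 1/(2*σ)) := by
  set k : ℝ → ℝ := fun y => ((y - x)/σ^2) * normalDensity σ (x - y) with hk_def
  have hk : Integrable k := integrable_k hσ x
  have hk_meas : AEStronglyMeasurable k volume := hk.aestronglyMeasurable
  have hcdf_meas : ∀ (ρ : Measure ℝ) [IsProbabilityMeasure ρ] (c : ℝ),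
      Measurable (fun y => cdf ρ (y + c)) := by
    intro ρ _ c
    exact (monotone_cdf ρ).measurable.comp (measurable_id.add_const c)
  have hbdd : ∀ (ρ : Measure ℝ) [IsProbabilityMeasure ρ] (y : ℝ),
      0 ≤ cdf ρ y ∧ cdf ρ y ≤ 1 := fun ρ _ y => ⟨cdf_nonneg ρ y, cdf_le_one ρ y⟩
  have hkF : ∀ (ρ : Measure ℝ) [IsProbabilityMeasure ρ],
      Integrable (fun y => k y * cdf ρ y) := by
    intro ρ _
    refine hk.mono ?_ (Eventually.of_forall fun y => ?_)
    · exact hk_meas.mul ((monotone_cdf ρ).measurable.aestronglyMeasurable)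
    · rw [norm_mul, Real.norm_eq_abs, Real.norm_eq_abs,
        abs_of_nonneg (cdf_nonneg ρ y)]
      nlinarith [abs_nonneg (k y), cdf_le_one ρ y, cdf_nonneg ρ y]
  rw [repr_integral hσ μ x, repr_integral hσ ν x, ← integral_sub (hkF μ) (hkF ν)]
  -- pointwise bound
  have hdiff_nonneg : ∀ y : ℝ, 0 ≤ cdf ν (y + h) - cdf ν (y - h) := by
    intro y
    have := monotone_cdf ν (show y - h ≤ y + h by linarith)
    linarith
  have hptw : ∀ y : ℝ, ‖k y * cdf μ y - k y * cdf ν y‖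
      ≤ |k y| * ((cdf ν (y + h) - cdf ν (y - h)) + h) := by
    intro y
    rw [← mul_sub, Real.norm_eq_abs, abs_mul]
    apply mul_le_mul_of_nonneg_left _ (abs_nonneg (k y))
    rw [abs_le]
    have h1 := (hFG y).1
    have h2 := (hFG y).2
    have h3 := monotone_cdf ν (show y - h ≤ y by linarith)
    have h4 := monotone_cdf ν (show y ≤ y + h by linarith)
    constructor <;> [skip; skip] <;> nlinarith
  have hmeas2 : AEStronglyMeasurable
      (fun y => |k y| * ((cdf ν (y + h) - cdf ν (y - h)) + h)) volume := by
    apply (hk.abs.aestronglyMeasurable).mul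
    apply AEStronglyMeasurable.add _ aestronglyMeasurable_const
    exact ((hcdf_meas ν h).sub (by
      have := (monotone_cdf ν).measurable.comp (measurable_id.sub_const h)
      exact this)).aestronglyMeasurable
  have hint2 : Integrable (fun y => |k y| * ((cdf ν (y + h) - cdf ν (y - h)) + h)) := by
    refine (hk.abs.const_mul (1 + h)).mono' hmeas2 (Eventually.of_forall fun y => ?_)
    rw [Real.norm_eq_abs]
    have hle : (cdf ν (y + h) - cdf ν (y - h)) + h ≤ 1 + h := by
      have := cdf_le_one (μ := ν) (y + h)
      have := cdf_nonneg (μ := ν) (y - h)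
      linarith
    rw [abs_of_nonneg (mul_nonneg (abs_nonneg _) (by have := hdiff_nonneg y; linarith))]
    calc |k y| * ((cdf ν (y + h) - cdf ν (y - h)) + h) ≤ |k y| * (1 + h) :=
          mul_le_mul_of_nonneg_left hle (abs_nonneg _)
      _ = (1 + h) * |k y| := by ring
  have hint3 : Integrable (fun y => |k y| * (cdf ν (y + h) - cdf ν (y - h))) := by
    refine hk.abs.mono' ?_ (Eventually.of_forall fun y => ?_)
    · exact (hk.abs.aestronglyMeasurable).mul (((hcdf_meas ν h).sub
        ((monotone_cdf ν).measurable.comp (measurable_id.sub_const h))).aestronglyMeasurable)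
    · rw [Real.norm_eq_abs, abs_of_nonneg (mul_nonneg (abs_nonneg _) (hdiff_nonneg y))]
      have hle : cdf ν (y + h) - cdf ν (y - h) ≤ 1 := by
        have := cdf_le_one ν (y + h)
        have := cdf_nonneg ν (y - h)
        linarith
      nlinarith [abs_nonneg (k y), hdiff_nonneg y]
  calc |∫ y, (k y * cdf μ y - k y * cdf ν y)|
      ≤ ∫ y, ‖k y * cdf μ y - k y * cdf ν y‖ := by
        rw [← Real.norm_eq_abs]
        exact norm_integral_le_integral_norm _
    _ ≤ ∫ y, |k y| * ((cdf ν (y + h) - cdf ν (y - h)) + h) := by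
        apply integral_mono_of_nonneg (Eventually.of_forall fun y => norm_nonneg _) hint2
        exact Eventually.of_forall hptw
    _ = (∫ y, |k y| * (cdf ν (y + h) - cdf ν (y - h))) + h * ∫ y, |k y| := by
        rw [← integral_const_mul, ← integral_add hint3 (hk.abs.const_mul h)]
        congr 1
        funext y
        ring
    _ ≤ 2 * h * (C σ * Real.exp (-2⁻¹ : ℝ) / σ) + h * (2 * C σ) := by
        apply add_le_add
        · exact bound_Gdiff hσ ν x h hh
        · rw [integral_abs_k hσ x]
    _ ≤ (h/σ) * (1 + 1/(2*σ)) := by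
        have hC := C_le hσ
        have hE := exp_neg_half_le
        have hE0 := Real.exp_pos (-2⁻¹ : ℝ)
        have hC0 := C_pos hσ
        have key1 : 2 * C σ ≤ 1/σ := by
          calc 2 * C σ ≤ 2 * (2.5 * σ)⁻¹ := by linarith
            _ ≤ 1/σ := by
              rw [div_eq_mul_inv, one_mul]
              rw [show (2.5 * σ)⁻¹ = 2.5⁻¹ * σ⁻¹ by rw [mul_inv]]
              have : (0:ℝ) < σ⁻¹ := by positivity
              nlinarith
        have key2 : 2 * (C σ * Real.exp (-2⁻¹ : ℝ) / σ) ≤ 1/(2*σ^2) := by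
          have h1 : C σ * Real.exp (-2⁻¹ : ℝ) ≤ (2.5 * σ)⁻¹ * (5/8) := by
            apply mul_le_mul hC hE hE0.le (by positivity)
          have h2 : (2.5 * σ)⁻¹ * (5/8) = 1/(4*σ) := by
            rw [mul_inv]
            field_simp
            ring
          have h3 : C σ * Real.exp (-2⁻¹ : ℝ) / σ ≤ 1/(4*σ) / σ := by
            apply div_le_div_of_nonneg_right _ hσ.le
            · rw [← h2]; exact h1
          have h4 : (1:ℝ)/(4*σ)/σ = 1/(4*σ^2) := by
            field_simp
          rw [h4] at h3
          have h5 : (2:ℝ) * (1/(4*σ^2)) = 1/(2*σ^2) := by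
            field_simp
            ring
          linarith
        have expand : (h/σ) * (1 + 1/(2*σ)) = h * (1/σ) + h * (1/(2*σ^2)) := by
          field_simp
        rw [expand]
        have t1 : 2 * h * (C σ * Real.exp (-2⁻¹ : ℝ) / σ) ≤ h * (1/(2*σ^2)) := by
          have := mul_le_mul_of_nonneg_left key2 hh
          calc 2 * h * (C σ * Real.exp (-2⁻¹ : ℝ) / σ)
              = h * (2 * (C σ * Real.exp (-2⁻¹ : ℝ) / σ)) := by ring
            _ ≤ h * (1/(2*σ^2)) := this
        have t2 : h * (2 * C σ) ≤ h * (1/σ) := mul_le_mul_of_nonneg_left key1 hh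
        linarith

end Stmt18

theorem stmt_18 (μ ν : Measure ℝ) [IsProbabilityMeasure μ] [IsProbabilityMeasure ν]
    (σ : ℝ) (hσ : 0 < σ) :
    (⨆ x : ℝ, |(∫ y, normalDensity σ (x - y) ∂μ) - ∫ y, normalDensity σ (x - y) ∂ν|)
      ≤ (levyDist (fun x => cdf μ x) (fun x => cdf ν x) / σ) * (1 + 1 / (2 * σ)) := by
  classical
  set S : Set ℝ := {h : ℝ | 0 ≤ h ∧ ∀ x : ℝ,
      cdf ν (x - h) - h ≤ cdf μ x ∧ cdf μ x ≤ cdf ν (x + h) + h} with hS_def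
  have hL : levyDist (fun x => cdf μ x) (fun x => cdf ν x) = sInf S := rfl
  have hSne : S.Nonempty := by
    refine ⟨1, by norm_num, fun x => ⟨?_, ?_⟩⟩
    · have h1 := cdf_le_one ν (x - 1)
      have h2 := cdf_nonneg μ x
      linarith
    · have h1 := cdf_le_one μ x
      have h2 := cdf_nonneg ν (x + 1)
      linarith
  have hkey : ∀ h ∈ S,
      (⨆ x : ℝ, |(∫ y, normalDensity σ (x - y) ∂μ) - ∫ y, normalDensity σ (x - y) ∂ν|)
        ≤ (h/σ) * (1 + 1/(2*σ)) := by
    intro h hh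
    apply ciSup_le
    intro x
    exact Stmt18.pointwise_bound hσ μ ν x h hh.1 (fun y => hh.2 y)
  have h2σ : (0:ℝ) < 2*σ := by linarith
  have hfac : (0:ℝ) < 1 + 1/(2*σ) := by
    have : (0:ℝ) < 1/(2*σ) := by positivity
    linarith
  set c : ℝ := (1 + 1/(2*σ))/σ with hc_def
  have hc : 0 < c := div_pos hfac hσ
  have hle : (⨆ x : ℝ, |(∫ y, normalDensity σ (x - y) ∂μ) - ∫ y, normalDensity σ (x - y) ∂ν|) / c
      ≤ sInf S := by
    apply le_csInf hSne
    intro h hh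
    rw [div_le_iff₀ hc]
    calc (⨆ x : ℝ, |(∫ y, normalDensity σ (x - y) ∂μ) - ∫ y, normalDensity σ (x - y) ∂ν|)
        ≤ (h/σ) * (1 + 1/(2*σ)) := hkey h hh
      _ = h * c := by rw [hc_def]; ring
  rw [hL]
  have hfin := (div_le_iff₀ hc).1 hle
  calc (⨆ x : ℝ, |(∫ y, normalDensity σ (x - y) ∂μ) - ∫ y, normalDensity σ (x - y) ∂ν|)
      ≤ sInf S * c := hfin
    _ = (sInf S / σ) * (1 + 1 / (2 * σ)) := by rw [hc_def]; ring
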